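/- Under the dual error setting with coercivity constant α_A, one has ∑_{n=0}^{N−1} (εⁿ)ᵀ M εⁿ ≤ (T/α_A)·∑_{n=0}^{N−1} ‖ϱⁿ‖₋₁², where T = N·Δt. -/

import Mathlib

open Matrix BigOperators Finset

/-- The energy norm `‖v‖_{G*} = √(vᵀ G* v)` induced by a matrix `G`. -/
noncomputable def normG {d : ℕ} (G : Matrix (Fin d) (Fin d) ℝ) (v : Fin d → ℝ) : ℝ :=
  Real.sqrt (v ⬝ᵥ G.mulVec v)

/-- The dual norm `‖r‖₋₁ = sup_{v ≠ 0} (rᵀ v)/‖v‖_{G*}`. -/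
noncomputable def dualNorm {d : ℕ} (G : Matrix (Fin d) (Fin d) ℝ) (r : Fin d → ℝ) : ℝ :=
  ⨆ v : {v : Fin d → ℝ // v ≠ 0}, (r ⬝ᵥ (v : Fin d → ℝ)) / normG G (v : Fin d → ℝ)

/-- The symmetric part `(A + Aᵀ)/2` of a matrix. -/
noncomputable def symPart {d : ℕ} (A : Matrix (Fin d) (Fin d) ℝ) : Matrix (Fin d) (Fin d) ℝ :=
  ((1 : ℝ)/2) • (A + Aᵀ)

lemma dot_mulVec_symm {d : ℕ} {G : Matrix (Fin d) (Fin d) ℝ} (hsym : Gᵀ = G)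
    (x y : Fin d → ℝ) : x ⬝ᵥ G.mulVec y = y ⬝ᵥ G.mulVec x := by
  rw [dotProduct_mulVec, ← mulVec_transpose, hsym, dotProduct_comm]

lemma dot_mulVec_transpose_self {d : ℕ} (A : Matrix (Fin d) (Fin d) ℝ)
    (x : Fin d → ℝ) : x ⬝ᵥ Aᵀ.mulVec x = x ⬝ᵥ A.mulVec x := by
  rw [dotProduct_mulVec, ← mulVec_transpose, transpose_transpose, dotProduct_comm]

lemma dot_mulVec_nonneg {d : ℕ} {G : Matrix (Fin d) (Fin d) ℝ} (hG : G.PosSemidef)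
    (v : Fin d → ℝ) : 0 ≤ v ⬝ᵥ G.mulVec v := by simpa using hG.dotProduct_mulVec_nonneg v

lemma normG_nonneg {d : ℕ} (G : Matrix (Fin d) (Fin d) ℝ) (v : Fin d → ℝ) :
    0 ≤ normG G v := Real.sqrt_nonneg _

lemma normG_sq {d : ℕ} {G : Matrix (Fin d) (Fin d) ℝ} (hG : G.PosSemidef)
    (v : Fin d → ℝ) : (normG G v)^2 = v ⬝ᵥ G.mulVec v :=
  Real.sq_sqrt (dot_mulVec_nonneg hG v)

lemma normG_pos {d : ℕ} {G : Matrix (Fin d) (Fin d) ℝ} (hG : G.PosDef)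
    {v : Fin d → ℝ} (hv : v ≠ 0) : 0 < normG G v := by
  apply Real.sqrt_pos.2
  simpa using hG.dotProduct_mulVec_pos hv

lemma normG_neg {d : ℕ} (G : Matrix (Fin d) (Fin d) ℝ) (v : Fin d → ℝ) :
    normG G (-v) = normG G v := by
  simp [normG, mulVec_neg, dotProduct_neg, neg_dotProduct]

lemma psd_cs {d : ℕ} {G : Matrix (Fin d) (Fin d) ℝ} (hG : G.PosSemidef)
    (x y : Fin d → ℝ) :
    (x ⬝ᵥ G.mulVec y)^2 ≤ (x ⬝ᵥ G.mulVec x) * (y ⬝ᵥ G.mulVec y) := by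
  have hsym : Gᵀ = G := by
    rw [← Matrix.conjTranspose_eq_transpose_of_trivial]; exact hG.isHermitian
  have key : ∀ t : ℝ, 0 ≤ (y ⬝ᵥ G.mulVec y) * (t * t) + (2 * (x ⬝ᵥ G.mulVec y)) * t
      + (x ⬝ᵥ G.mulVec x) := by
    intro t
    have h0 := hG.dotProduct_mulVec_nonneg (x + t • y)
    have hyx := dot_mulVec_symm hsym y x
    simp only [mulVec_add, mulVec_smul, add_dotProduct, dotProduct_add,
      smul_dotProduct, dotProduct_smul, smul_eq_mul, star_add, star_smul, star_trivial,
      RCLike.re_to_real] at h0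
    rw [hyx] at h0
    ring_nf at h0 ⊢
    linarith [h0]
  have hdisc := discrim_le_zero key
  rw [discrim] at hdisc
  nlinarith [hdisc]

lemma dual_bound {d : ℕ} {G : Matrix (Fin d) (Fin d) ℝ} (hG : G.PosDef)
    (r v : Fin d → ℝ) : r ⬝ᵥ v ≤ dualNorm G r * normG G v := by
  have hsym : Gᵀ = G := by
    rw [← Matrix.conjTranspose_eq_transpose_of_trivial]; exact hG.isHermitian
  have hGinv : G * G⁻¹ = 1 := mul_nonsing_inv G (isUnit_iff_ne_zero.2 hG.det_pos.ne')
  have hrep : ∀ w : Fin d → ℝ, r ⬝ᵥ w = (G⁻¹.mulVec r) ⬝ᵥ G.mulVec w := by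
    intro w
    rw [dot_mulVec_symm hsym, mulVec_mulVec, hGinv, one_mulVec, dotProduct_comm]
  have hCmul : ∀ w : Fin d → ℝ, r ⬝ᵥ w ≤ normG G (G⁻¹.mulVec r) * normG G w := by
    intro w
    have hcs := psd_cs hG.posSemidef (G⁻¹.mulVec r) w
    rw [← hrep w] at hcs
    rw [← normG_sq hG.posSemidef (G⁻¹.mulVec r), ← normG_sq hG.posSemidef w] at hcs
    nlinarith [normG_nonneg G (G⁻¹.mulVec r), normG_nonneg G w, hcs,
      mul_nonneg (normG_nonneg G (G⁻¹.mulVec r)) (normG_nonneg G w)]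
  have hbdd : BddAbove (Set.range fun v : {v : Fin d → ℝ // v ≠ 0} =>
      (r ⬝ᵥ (v : Fin d → ℝ)) / normG G (v : Fin d → ℝ)) := by
    refine ⟨normG G (G⁻¹.mulVec r), ?_⟩
    rintro x ⟨⟨w, hw⟩, rfl⟩
    exact (div_le_iff₀ (normG_pos hG hw)).2 (hCmul w)
  by_cases hv : v = 0
  · subst hv
    simp [normG]
  · have hle : r ⬝ᵥ v / normG G v ≤ dualNorm G r :=
      le_ciSup hbdd (⟨v, hv⟩ : {v : Fin d → ℝ // v ≠ 0})
    have hpos := normG_pos hG hv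
    calc r ⬝ᵥ v = (r ⬝ᵥ v / normG G v) * normG G v := by field_simp
    _ ≤ dualNorm G r * normG G v := mul_le_mul_of_nonneg_right hle hpos.le

theorem stmt10 {d : ℕ} (hd : 1 ≤ d)
    (G M A : Matrix (Fin d) (Fin d) ℝ) (hG : G.PosDef) (hM : M.PosSemidef)
    (Δt : ℝ) (hΔt : 0 < Δt) (N : ℕ) (hN : 1 ≤ N)
    (αA : ℝ) (hαA : 0 < αA)
    (hcoA : ∀ v : Fin d → ℝ, αA * (normG G v)^2 ≤ v ⬝ᵥ (symPart A).mulVec v)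
    (ε ϱ : ℕ → Fin d → ℝ) (hεN : ε N = 0)
    (hstep : ∀ k, k < N →
      (M + Δt • Aᵀ).mulVec (ε k) = M.mulVec (ε (k + 1)) - Δt • ϱ k) :
    ∑ n ∈ Finset.range N, ε n ⬝ᵥ M.mulVec (ε n) ≤
      ((N * Δt) / αA) * ∑ n ∈ Finset.range N, (dualNorm G (ϱ n))^2 := by
  have hMsym : Mᵀ = M := by
    rw [← Matrix.conjTranspose_eq_transpose_of_trivial]; exact hM.isHermitian
  -- one-step energy estimate
  have key : ∀ k, k < N → ε k ⬝ᵥ M.mulVec (ε k) ≤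
      ε (k+1) ⬝ᵥ M.mulVec (ε (k+1)) + (Δt/αA) * (dualNorm G (ϱ k))^2 := by
    intro k hk
    set s := normG G (ε k) with hs
    set D := dualNorm G (ϱ k) with hD
    have h := congrArg (fun w => ε k ⬝ᵥ w) (hstep k hk)
    simp only [add_mulVec, smul_mulVec, dotProduct_add, dotProduct_sub,
      dotProduct_smul, smul_eq_mul] at h
    -- coercivity
    have hAq : αA * s^2 ≤ ε k ⬝ᵥ Aᵀ.mulVec (ε k) := by
      have h1 := hcoA (ε k)
      have h2 : ε k ⬝ᵥ (symPart A).mulVec (ε k) = ε k ⬝ᵥ Aᵀ.mulVec (ε k) := by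
        simp only [symPart, smul_mulVec, add_mulVec, dotProduct_add,
          dotProduct_smul, smul_eq_mul, dot_mulVec_transpose_self]
        ring
      rw [h2] at h1
      exact h1
    -- Cauchy–Schwarz-type bound for the M-cross term
    have hM2 : ε k ⬝ᵥ M.mulVec (ε (k+1)) ≤
        (ε k ⬝ᵥ M.mulVec (ε k) + ε (k+1) ⬝ᵥ M.mulVec (ε (k+1))) / 2 := by
      have h0 := dot_mulVec_nonneg hM (ε k - ε (k+1))
      have hswap := dot_mulVec_symm hMsym (ε (k+1)) (ε k)
      simp only [mulVec_sub, sub_dotProduct, dotProduct_sub] at h0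
      linarith
    -- dual norm bound
    have hdual : -(ε k ⬝ᵥ ϱ k) ≤ D * s := by
      have h0 := dual_bound hG (ϱ k) (-(ε k))
      rw [normG_neg, dotProduct_neg, dotProduct_comm] at h0
      exact h0
    have hy := mul_nonneg hΔt.le (sq_nonneg (αA * s - D))
    have hA1 := mul_le_mul_of_nonneg_left hAq hΔt.le
    have hd1 := mul_le_mul_of_nonneg_left hdual hΔt.le
    have step1 : ε k ⬝ᵥ M.mulVec (ε k) ≤ ε (k+1) ⬝ᵥ M.mulVec (ε (k+1))
        + 2 * (Δt * (D * s)) - 2 * (Δt * (αA * s^2)) := by linarith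
    have step2 := mul_le_mul_of_nonneg_left step1 hαA.le
    have hnn := mul_nonneg hΔt.le (sq_nonneg (αA * s))
    have hgoal : αA * (ε k ⬝ᵥ M.mulVec (ε k)) ≤
        αA * (ε (k+1) ⬝ᵥ M.mulVec (ε (k+1))) + Δt * D^2 := by nlinarith [step2, hy, hnn]
    have hexp : αA * (ε (k+1) ⬝ᵥ M.mulVec (ε (k+1)) + (Δt/αA) * D^2)
        = αA * (ε (k+1) ⬝ᵥ M.mulVec (ε (k+1))) + Δt * D^2 := by
      field_simp
    rw [← mul_le_mul_iff_right₀ hαA, hexp]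
    exact hgoal
  -- downward induction
  have claim : ∀ j, j ≤ N → ε (N - j) ⬝ᵥ M.mulVec (ε (N - j)) ≤
      (Δt/αA) * ∑ m ∈ Finset.Ico (N - j) N, (dualNorm G (ϱ m))^2 := by
    intro j
    induction j with
    | zero => intro _; simp [hεN]
    | succ j ih =>
      intro hj
      have hj' : j ≤ N := Nat.le_of_succ_le hj
      have hlt : N - (j+1) < N := by omega
      have hsucc : N - (j+1) + 1 = N - j := by omega
      have h1 := key (N - (j+1)) hlt
      rw [hsucc] at h1
      have h2 := ih hj'
      have h3 : (∑ m ∈ Finset.Ico (N - (j+1)) N, (dualNorm G (ϱ m))^2)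
          = (dualNorm G (ϱ (N-(j+1))))^2
            + ∑ m ∈ Finset.Ico (N - j) N, (dualNorm G (ϱ m))^2 := by
        rw [Finset.sum_eq_sum_Ico_succ_bot hlt, hsucc]
      rw [h3, mul_add]
      linarith
  -- per-index bound
  have hbound : ∀ n ∈ Finset.range N, ε n ⬝ᵥ M.mulVec (ε n) ≤
      (Δt/αA) * ∑ m ∈ Finset.range N, (dualNorm G (ϱ m))^2 := by
    intro n hn
    rw [Finset.mem_range] at hn
    have hc := claim (N - n) (by omega)
    rw [Nat.sub_sub_self hn.le] at hc
    refine hc.trans ?_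
    have hsub : Finset.Ico n N ⊆ Finset.range N := by
      rw [Finset.range_eq_Ico]
      exact Finset.Ico_subset_Ico (Nat.zero_le n) le_rfl
    have hmono := Finset.sum_le_sum_of_subset_of_nonneg hsub
      (fun i _ _ => sq_nonneg (dualNorm G (ϱ i)))
    have hpos : (0:ℝ) ≤ Δt/αA := by positivity
    exact mul_le_mul_of_nonneg_left hmono hpos
  calc ∑ n ∈ Finset.range N, ε n ⬝ᵥ M.mulVec (ε n)
      ≤ ∑ _n ∈ Finset.range N,
          (Δt/αA) * ∑ m ∈ Finset.range N, (dualNorm G (ϱ m))^2 :=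
        Finset.sum_le_sum hbound
    _ = ((N * Δt) / αA) * ∑ n ∈ Finset.range N, (dualNorm G (ϱ n))^2 := by
        rw [Finset.sum_const, Finset.card_range, nsmul_eq_mul]
        ring
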